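/- Let $\hat K = (-1,1)^2$ and let $\hat{\bm u} \in Q_{k-1,k} \times Q_{k,k-1}$ (with $k \ge 3$) satisfy: (i) the tangential component $\hat{\bm u}\cdot\hat{\bm\tau}$ vanishes on all four edges of $\hat K$; (ii) $\hat\nabla\times\hat{\bm u} = 0$ on $\partial\hat K$; (iii) $\int_{\hat K}\hat{\bm u}\cdot\hat\nabla\times\hat\varphi\, dV = 0$ for all $\hat\varphi \in \tilde Q_{k-3}(\hat K)$; and (iv) $\int_{\hat K}\hat{\bm u}\cdot\hat{\bm q}\, dV = 0$ for all $\hat{\bm q} \in Q_{k-2}(\hat K)\cdot\hat{\bm x}$. Then $\hat{\bm u} = 0$ (unisolvence of the rectangular $H^2(\mathrm{curl})$-conforming element). -/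

import Mathlib

set_option maxHeartbeats 1600000


open MvPolynomial intervalIntegral Polynomial MeasureTheory

noncomputable section RectAux

abbrev KK := MvPolynomial (Fin 1) ℝ

lemma degreeOf_le_iff' {σ : Type*} {R : Type*} [CommSemiring R] {n : σ} {f : MvPolynomial σ R} {d : ℕ} :
    degreeOf n f ≤ d ↔ ∀ m ∈ f.support, m n ≤ d := by
  rw [degreeOf_eq_sup, Finset.sup_le_iff]



def R1 (a : ℝ) (P : MvPolynomial (Fin 2) ℝ) : Polynomial ℝ :=
  MvPolynomial.aeval ![Polynomial.X, Polynomial.C a] P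

def R2 (a : ℝ) (P : MvPolynomial (Fin 2) ℝ) : Polynomial ℝ :=
  MvPolynomial.aeval ![Polynomial.C a, Polynomial.X] P

lemma eval_R1 (a t : ℝ) (P : MvPolynomial (Fin 2) ℝ) :
    (R1 a P).eval t = MvPolynomial.eval ![t, a] P := by
  induction P using MvPolynomial.induction_on with
  | C c => simp [R1]
  | add p q hp hq => simp only [R1, map_add, Polynomial.eval_add] at *; rw [hp, hq]
  | mul_X p i hp =>
    simp only [R1, map_mul, Polynomial.eval_mul] at *
    rw [hp]; fin_cases i <;> simp

lemma eval_R2 (a t : ℝ) (P : MvPolynomial (Fin 2) ℝ) :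
    (R2 a P).eval t = MvPolynomial.eval ![a, t] P := by
  induction P using MvPolynomial.induction_on with
  | C c => simp [R2]
  | add p q hp hq => simp only [R2, map_add, Polynomial.eval_add] at *; rw [hp, hq]
  | mul_X p i hp =>
    simp only [R2, map_mul, Polynomial.eval_mul] at *
    rw [hp]; fin_cases i <;> simp

lemma deriv_R1 (a : ℝ) (P : MvPolynomial (Fin 2) ℝ) :
    (R1 a P).derivative = R1 a (pderiv 0 P) := by
  induction P using MvPolynomial.induction_on with
  | C c => simp [R1]
  | add p q hp hq => simp only [R1, map_add, Polynomial.derivative_add] at *; rw [hp, hq]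
  | mul_X p i hp =>
    simp only [R1] at *
    fin_cases i <;>
      simp [map_mul, Polynomial.derivative_mul, hp, pderiv_mul, pderiv_X_self,
        pderiv_X_of_ne, map_add] <;> ring

lemma deriv_R2 (a : ℝ) (P : MvPolynomial (Fin 2) ℝ) :
    (R2 a P).derivative = R2 a (pderiv 1 P) := by
  induction P using MvPolynomial.induction_on with
  | C c => simp [R2]
  | add p q hp hq => simp only [R2, map_add, Polynomial.derivative_add] at *; rw [hp, hq]
  | mul_X p i hp =>
    simp only [R2] at *
    fin_cases i <;>
      simp [map_mul, Polynomial.derivative_mul, hp, pderiv_mul, pderiv_X_self,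
        pderiv_X_of_ne, map_add] <;> ring


-- extension of vanishing on Icc to vanishing everywhere, horizontal line
lemma line_zero_h {a : ℝ} {P : MvPolynomial (Fin 2) ℝ} {S : Set ℝ} (hS : S.Infinite)
    (h : ∀ t ∈ S, MvPolynomial.eval ![t, a] P = 0) :
    ∀ t : ℝ, MvPolynomial.eval ![t, a] P = 0 := by
  have hz : R1 a P = 0 := by
    apply Polynomial.eq_zero_of_infinite_isRoot
    apply Set.Infinite.mono (s := S)
    · intro t ht; simp only [Set.mem_setOf_eq, Polynomial.IsRoot, eval_R1]; exact h t ht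
    · exact hS
  intro t; rw [← eval_R1, hz, Polynomial.eval_zero]

lemma line_zero_v {a : ℝ} {P : MvPolynomial (Fin 2) ℝ} {S : Set ℝ} (hS : S.Infinite)
    (h : ∀ t ∈ S, MvPolynomial.eval ![a, t] P = 0) :
    ∀ t : ℝ, MvPolynomial.eval ![a, t] P = 0 := by
  have hz : R2 a P = 0 := by
    apply Polynomial.eq_zero_of_infinite_isRoot
    apply Set.Infinite.mono (s := S)
    · intro t ht; simp only [Set.mem_setOf_eq, Polynomial.IsRoot, eval_R2]; exact h t ht
    · exact hS
  intro t; rw [← eval_R2, hz, Polynomial.eval_zero]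

-- zero on open square implies zero polynomial
lemma zero_of_zero_on_square {P : MvPolynomial (Fin 2) ℝ}
    (h : ∀ x ∈ Set.Ioo (-1:ℝ) 1, ∀ y ∈ Set.Ioo (-1:ℝ) 1, MvPolynomial.eval ![x, y] P = 0) :
    P = 0 := by
  have h1 : ∀ y : ℝ, ∀ x ∈ Set.Ioo (-1:ℝ) 1, MvPolynomial.eval ![x, y] P = 0 := by
    intro y x hx
    have hz : R2 x P = 0 := by
      apply Polynomial.eq_zero_of_infinite_isRoot
      apply Set.Infinite.mono (s := Set.Ioo (-1:ℝ) 1)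
      · intro t ht; simp only [Set.mem_setOf_eq, Polynomial.IsRoot, eval_R2]; exact h x hx t ht
      · exact Set.Ioo_infinite (by norm_num : (-1:ℝ) < 1)
    rw [← eval_R2, hz, Polynomial.eval_zero]
  have h2 : ∀ x y : ℝ, MvPolynomial.eval ![x, y] P = 0 := by
    intro x y
    have hz : R1 y P = 0 := by
      apply Polynomial.eq_zero_of_infinite_isRoot
      apply Set.Infinite.mono (s := Set.Ioo (-1:ℝ) 1)
      · intro t ht; simp only [Set.mem_setOf_eq, Polynomial.IsRoot, eval_R1]; exact h1 y t ht
      · exact Set.Ioo_infinite (by norm_num : (-1:ℝ) < 1)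
    rw [← eval_R1, hz, Polynomial.eval_zero]
  apply MvPolynomial.funext
  intro v
  have : v = ![v 0, v 1] := by
    funext i; fin_cases i <;> rfl
  rw [map_zero, this]; exact h2 (v 0) (v 1)

-- analysis helpers
lemma cont_ev_x (a : ℝ) (P : MvPolynomial (Fin 2) ℝ) :
    Continuous fun t => MvPolynomial.eval ![t, a] P := by
  have : (fun t => MvPolynomial.eval ![t, a] P) = fun t => (R1 a P).eval t := by
    funext t; rw [eval_R1]
  rw [this]; exact (R1 a P).continuous

lemma cont_ev_y (a : ℝ) (P : MvPolynomial (Fin 2) ℝ) :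
    Continuous fun t => MvPolynomial.eval ![a, t] P := by
  have : (fun t => MvPolynomial.eval ![a, t] P) = fun t => (R2 a P).eval t := by
    funext t; rw [eval_R2]
  rw [this]; exact (R2 a P).continuous

lemma ii_y (a c d : ℝ) (P : MvPolynomial (Fin 2) ℝ) :
    IntervalIntegrable (fun t => MvPolynomial.eval ![a, t] P) MeasureTheory.volume c d :=
  (cont_ev_y a P).intervalIntegrable c d

lemma ii_x (a c d : ℝ) (P : MvPolynomial (Fin 2) ℝ) :
    IntervalIntegrable (fun t => MvPolynomial.eval ![t, a] P) MeasureTheory.volume c d :=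
  (cont_ev_x a P).intervalIntegrable c d

lemma ftc_y (x : ℝ) (P : MvPolynomial (Fin 2) ℝ) :
    (∫ t in (-1:ℝ)..1, MvPolynomial.eval ![x, t] (pderiv 1 P)) =
      MvPolynomial.eval ![x, 1] P - MvPolynomial.eval ![x, -1] P := by
  have key : ∀ t : ℝ, HasDerivAt (fun s => (R2 x P).eval s)
      (MvPolynomial.eval ![x, t] (pderiv 1 P)) t := by
    intro t
    have := Polynomial.hasDerivAt (R2 x P) t
    rwa [deriv_R2, eval_R2] at this
  have := intervalIntegral.integral_eq_sub_of_hasDerivAt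
    (f := fun s => (R2 x P).eval s)
    (f' := fun t => MvPolynomial.eval ![x, t] (pderiv 1 P))
    (fun t _ => key t) ((ii_y x (-1) 1 (pderiv 1 P)))
  rw [this]; rw [eval_R2, eval_R2]

lemma ftc_x (y : ℝ) (P : MvPolynomial (Fin 2) ℝ) :
    (∫ t in (-1:ℝ)..1, MvPolynomial.eval ![t, y] (pderiv 0 P)) =
      MvPolynomial.eval ![1, y] P - MvPolynomial.eval ![-1, y] P := by
  have key : ∀ t : ℝ, HasDerivAt (fun s => (R1 y P).eval s)
      (MvPolynomial.eval ![t, y] (pderiv 0 P)) t := by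
    intro t
    have := Polynomial.hasDerivAt (R1 y P) t
    rwa [deriv_R1, eval_R1] at this
  have := intervalIntegral.integral_eq_sub_of_hasDerivAt
    (f := fun s => (R1 y P).eval s)
    (f' := fun t => MvPolynomial.eval ![t, y] (pderiv 0 P))
    (fun t _ => key t) ((ii_x y (-1) 1 (pderiv 0 P)))
  rw [this]; rw [eval_R1, eval_R1]


def integY (P : MvPolynomial (Fin 2) ℝ) : MvPolynomial (Fin 2) ℝ :=
  (AddMonoidAlgebra.coeff P).sum fun d c => monomial (d + Finsupp.single 1 1) (c / (d 1 + 1))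

def integX (P : MvPolynomial (Fin 2) ℝ) : MvPolynomial (Fin 2) ℝ :=
  (AddMonoidAlgebra.coeff P).sum fun d c => monomial (d + Finsupp.single 0 1) (c / (d 0 + 1))

lemma pderiv_integY (P : MvPolynomial (Fin 2) ℝ) : pderiv 1 (integY P) = P := by
  have key : pderiv 1 (integY P) = ∑ d ∈ P.support, monomial d (coeff d P) := by
    rw [integY, MvPolynomial.sum_def, map_sum]
    refine Finset.sum_congr rfl fun d hd => ?_
    rw [pderiv_monomial]
    have h2 : d + Finsupp.single 1 1 - Finsupp.single 1 1 = d := by simp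
    have h1 : ((d + Finsupp.single 1 1 : Fin 2 →₀ ℕ)) 1 = d 1 + 1 := by simp
    rw [h2, h1]
    have hne : ((d 1 : ℝ) + 1) ≠ 0 := by positivity
    congr 1
    push_cast
    field_simp
  rw [key]; exact P.support_sum_monomial_coeff

lemma pderiv_integX (P : MvPolynomial (Fin 2) ℝ) : pderiv 0 (integX P) = P := by
  have key : pderiv 0 (integX P) = ∑ d ∈ P.support, monomial d (coeff d P) := by
    rw [integX, MvPolynomial.sum_def, map_sum]
    refine Finset.sum_congr rfl fun d hd => ?_
    rw [pderiv_monomial]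
    have h2 : d + Finsupp.single 0 1 - Finsupp.single 0 1 = d := by simp
    have h1 : ((d + Finsupp.single 0 1 : Fin 2 →₀ ℕ)) 0 = d 0 + 1 := by simp
    rw [h2, h1]
    have hne : ((d 0 : ℝ) + 1) ≠ 0 := by positivity
    congr 1
    push_cast
    field_simp
  rw [key]; exact P.support_sum_monomial_coeff




section DD
variable (P Q : MvPolynomial (Fin 2) ℝ)

/-- the double integral over the square -/
def I (P : MvPolynomial (Fin 2) ℝ) : ℝ :=
  ∫ x in (-1:ℝ)..1, ∫ y in (-1:ℝ)..1, MvPolynomial.eval ![x, y] P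

lemma inner_eq (x : ℝ) :
    (∫ y in (-1:ℝ)..1, MvPolynomial.eval ![x, y] P) =
      MvPolynomial.eval ![x, 1] (integY P) - MvPolynomial.eval ![x, -1] (integY P) := by
  rw [← ftc_y x (integY P), pderiv_integY]

lemma cont_inner : Continuous fun x => ∫ y in (-1:ℝ)..1, MvPolynomial.eval ![x, y] P := by
  have : (fun x => ∫ y in (-1:ℝ)..1, MvPolynomial.eval ![x, y] P) =
      fun x => MvPolynomial.eval ![x, 1] (integY P) - MvPolynomial.eval ![x, -1] (integY P) := by
    funext x; exact inner_eq P x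
  rw [this]
  exact (cont_ev_x 1 (integY P)).sub (cont_ev_x (-1) (integY P))

lemma ii_inner : IntervalIntegrable
    (fun x => ∫ y in (-1:ℝ)..1, MvPolynomial.eval ![x, y] P) volume (-1) 1 :=
  (cont_inner P).intervalIntegrable _ _

lemma I_add : I (P + Q) = I P + I Q := by
  unfold I
  have h1 : ∀ x : ℝ, (∫ y in (-1:ℝ)..1, MvPolynomial.eval ![x, y] (P + Q)) =
      (∫ y in (-1:ℝ)..1, MvPolynomial.eval ![x, y] P) +
      (∫ y in (-1:ℝ)..1, MvPolynomial.eval ![x, y] Q) := by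
    intro x
    rw [← intervalIntegral.integral_add (ii_y x (-1) 1 P) (ii_y x (-1) 1 Q)]
    congr 1; funext y; rw [map_add]
  rw [show (fun x => ∫ y in (-1:ℝ)..1, MvPolynomial.eval ![x, y] (P + Q)) = _ from funext h1]
  exact intervalIntegral.integral_add (ii_inner P) (ii_inner Q)

lemma I_neg : I (-P) = - I P := by
  unfold I
  have h1 : ∀ x : ℝ, (∫ y in (-1:ℝ)..1, MvPolynomial.eval ![x, y] (-P)) =
      -(∫ y in (-1:ℝ)..1, MvPolynomial.eval ![x, y] P) := by
    intro x
    rw [← intervalIntegral.integral_neg]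
    congr 1; funext y; rw [map_neg]
  rw [show (fun x => ∫ y in (-1:ℝ)..1, MvPolynomial.eval ![x, y] (-P)) = _ from funext h1]
  exact intervalIntegral.integral_neg

lemma I_sub : I (P - Q) = I P - I Q := by
  rw [sub_eq_add_neg, I_add, I_neg, sub_eq_add_neg]

lemma cont_ev2 : Continuous fun z : ℝ × ℝ => MvPolynomial.eval ![z.1, z.2] P := by
  apply (MvPolynomial.continuous_eval (p := P)).comp
  apply continuous_pi
  intro i
  fin_cases i
  · exact continuous_fst
  · exact continuous_snd

lemma I_swap : I P = ∫ y in (-1:ℝ)..1, ∫ x in (-1:ℝ)..1, MvPolynomial.eval ![x, y] P := by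
  unfold I
  have hle : (-1:ℝ) ≤ 1 := by norm_num
  rw [intervalIntegral.integral_of_le hle, intervalIntegral.integral_of_le hle]
  simp_rw [intervalIntegral.integral_of_le hle]
  have hint : Integrable (Function.uncurry fun x y => MvPolynomial.eval ![x, y] P)
      ((volume.restrict (Set.Ioc (-1:ℝ) 1)).prod (volume.restrict (Set.Ioc (-1:ℝ) 1))) := by
    rw [Measure.prod_restrict]
    have hcompact : IsCompact (Set.Icc (-1:ℝ) 1 ×ˢ Set.Icc (-1:ℝ) 1) :=
      isCompact_Icc.prod isCompact_Icc
    have : IntegrableOn (Function.uncurry fun x y => MvPolynomial.eval ![x, y] P)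
        (Set.Icc (-1:ℝ) 1 ×ˢ Set.Icc (-1:ℝ) 1) (volume.prod volume) := by
      rw [← Measure.volume_eq_prod]
      exact ((cont_ev2 P).continuousOn).integrableOn_compact hcompact
    rw [← Measure.volume_eq_prod]
    exact this.mono_set (Set.prod_mono Set.Ioc_subset_Icc_self Set.Ioc_subset_Icc_self)
  exact MeasureTheory.integral_integral_swap hint

end DD




lemma degreeOf_sum_le' {σ R : Type*} [CommSemiring R] {α : Type*} (n : σ) (s : Finset α)
    (f : α → MvPolynomial σ R) {d : ℕ} (h : ∀ a ∈ s, degreeOf n (f a) ≤ d) :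
    degreeOf n (∑ a ∈ s, f a) ≤ d :=
  le_trans (MvPolynomial.degreeOf_sum_le n s f) (Finset.sup_le h)

lemma degreeOf_monomial_le {σ R : Type*} [CommSemiring R] [DecidableEq σ] (n : σ) (s : σ →₀ ℕ) (a : R) :
    degreeOf n (monomial s a) ≤ s n := by
  apply degreeOf_le_iff'.2
  intro m hm
  rw [MvPolynomial.mem_support_iff, MvPolynomial.coeff_monomial] at hm
  by_cases h : s = m
  · subst h; exact le_refl _
  · simp [h] at hm

lemma degreeOf_integX_self (P : MvPolynomial (Fin 2) ℝ) {m : ℕ} (h : degreeOf 0 P ≤ m) :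
    degreeOf 0 (integX P) ≤ m + 1 := by
  rw [integX, MvPolynomial.sum_def]
  apply degreeOf_sum_le'
  intro d hd
  refine le_trans (degreeOf_monomial_le _ _ _) ?_
  have : ((d + Finsupp.single 0 1 : Fin 2 →₀ ℕ)) 0 = d 0 + 1 := by simp
  rw [this]
  exact Nat.add_le_add_right (degreeOf_le_iff'.1 h d hd) 1

lemma degreeOf_integX_other (P : MvPolynomial (Fin 2) ℝ) {m : ℕ} (h : degreeOf 1 P ≤ m) :
    degreeOf 1 (integX P) ≤ m := by
  rw [integX, MvPolynomial.sum_def]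
  apply degreeOf_sum_le'
  intro d hd
  refine le_trans (degreeOf_monomial_le _ _ _) ?_
  have : ((d + Finsupp.single 0 1 : Fin 2 →₀ ℕ)) 1 = d 1 := by simp
  rw [this]
  exact degreeOf_le_iff'.1 h d hd

lemma degreeOf_integY_self (P : MvPolynomial (Fin 2) ℝ) {m : ℕ} (h : degreeOf 1 P ≤ m) :
    degreeOf 1 (integY P) ≤ m + 1 := by
  rw [integY, MvPolynomial.sum_def]
  apply degreeOf_sum_le'
  intro d hd
  refine le_trans (degreeOf_monomial_le _ _ _) ?_
  have : ((d + Finsupp.single 1 1 : Fin 2 →₀ ℕ)) 1 = d 1 + 1 := by simp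
  rw [this]
  exact Nat.add_le_add_right (degreeOf_le_iff'.1 h d hd) 1

lemma degreeOf_integY_other (P : MvPolynomial (Fin 2) ℝ) {m : ℕ} (h : degreeOf 0 P ≤ m) :
    degreeOf 0 (integY P) ≤ m := by
  rw [integY, MvPolynomial.sum_def]
  apply degreeOf_sum_le'
  intro d hd
  refine le_trans (degreeOf_monomial_le _ _ _) ?_
  have : ((d + Finsupp.single 1 1 : Fin 2 →₀ ℕ)) 0 = d 0 := by simp
  rw [this]
  exact degreeOf_le_iff'.1 h d hd

lemma degreeOf_pderiv_self (f : MvPolynomial (Fin 2) ℝ) (i : Fin 2) {m : ℕ}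
    (h : degreeOf i f ≤ m + 1) : degreeOf i (pderiv i f) ≤ m := by
  conv_lhs => rw [f.as_sum]
  rw [map_sum]
  apply degreeOf_sum_le'
  intro d hd
  rw [pderiv_monomial]
  by_cases hz : d i = 0
  · rw [hz]; push_cast; rw [mul_zero, monomial_zero]; simp
  · refine le_trans (degreeOf_monomial_le _ _ _) ?_
    have : ((d - Finsupp.single i 1 : Fin 2 →₀ ℕ)) i = d i - 1 := by simp
    rw [this]
    have := degreeOf_le_iff'.1 h d hd
    omega

lemma degreeOf_pderiv_other (f : MvPolynomial (Fin 2) ℝ) (i j : Fin 2) (hij : i ≠ j) {m : ℕ}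
    (h : degreeOf j f ≤ m) : degreeOf j (pderiv i f) ≤ m := by
  conv_lhs => rw [f.as_sum]
  rw [map_sum]
  apply degreeOf_sum_le'
  intro d hd
  rw [pderiv_monomial]
  refine le_trans (degreeOf_monomial_le _ _ _) ?_
  have : ((d - Finsupp.single i 1 : Fin 2 →₀ ℕ)) j = d j := by
    simp [Finsupp.single_apply, hij]
  rw [this]
  exact degreeOf_le_iff'.1 h d hd

lemma coeff_pderiv (f : MvPolynomial (Fin 2) ℝ) (i : Fin 2) (d : Fin 2 →₀ ℕ) :
    coeff d (pderiv i f) = coeff (d + Finsupp.single i 1) f * ((d i : ℝ) + 1) := by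
  induction f using MvPolynomial.induction_on' with
  | monomial s a =>
    rw [pderiv_monomial]
    by_cases hs : s = d + Finsupp.single i 1
    · subst hs
      have h1 : d + Finsupp.single i 1 - Finsupp.single i 1 = d := by ext t; simp
      have h2 : ((d + Finsupp.single i 1 : Fin 2 →₀ ℕ)) i = d i + 1 := by simp
      rw [h1, h2, MvPolynomial.coeff_monomial, MvPolynomial.coeff_monomial, if_pos rfl, if_pos rfl]
      push_cast; ring
    · rw [MvPolynomial.coeff_monomial, MvPolynomial.coeff_monomial, if_neg hs, zero_mul]
      by_cases hd : s - Finsupp.single i 1 = d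
      · rw [if_pos hd]
        by_cases hzi : s i = 0
        · simp [hzi]
        · exfalso; apply hs
          rw [← hd]; ext t
          simp only [Finsupp.add_apply, Finsupp.coe_tsub, Pi.sub_apply, Finsupp.single_apply]
          by_cases ht : i = t
          · subst ht; simp only [eq_self_iff_true, if_true]; omega
          · simp [ht]
      · rw [if_neg hd]
  | add p q hp hq =>
    rw [map_add, MvPolynomial.coeff_add, MvPolynomial.coeff_add, hp, hq, add_mul]

lemma pderiv_comm01 (f : MvPolynomial (Fin 2) ℝ) :
    pderiv 0 (pderiv 1 f) = pderiv 1 (pderiv 0 f) := by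
  apply MvPolynomial.ext
  intro d
  rw [coeff_pderiv, coeff_pderiv, coeff_pderiv, coeff_pderiv]
  have h1 : d + Finsupp.single 0 1 + Finsupp.single 1 1
      = d + Finsupp.single 1 1 + Finsupp.single 0 1 := by ext t; simp; omega
  have h2 : ((d + Finsupp.single 0 1 : Fin 2 →₀ ℕ)) 1 = d 1 := by simp
  have h3 : ((d + Finsupp.single 1 1 : Fin 2 →₀ ℕ)) 0 = d 0 := by simp
  rw [h1, h2, h3]
  ring

lemma coeff_zero_of_pderiv0 {f : MvPolynomial (Fin 2) ℝ} (h : pderiv 0 f = 0)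
    {d : Fin 2 →₀ ℕ} (hd : d 0 ≠ 0) : coeff d f = 0 := by
  have key := coeff_pderiv f 0 (d - Finsupp.single 0 1)
  rw [h, MvPolynomial.coeff_zero] at key
  have hdd : d - Finsupp.single 0 1 + Finsupp.single 0 1 = d := by
    ext t
    by_cases ht : t = 0
    · subst ht; simp; omega
    · simp [Finsupp.single_apply, Ne.symm ht]
  rw [hdd] at key
  have hne : (((d - Finsupp.single 0 1 : Fin 2 →₀ ℕ)) 0 : ℝ) + 1 ≠ 0 := by positivity
  field_simp at key
  exact (mul_eq_zero.1 key.symm).resolve_right hne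

lemma pderiv0_integY {f : MvPolynomial (Fin 2) ℝ} (h : pderiv 0 f = 0) :
    pderiv 0 (integY f) = 0 := by
  rw [integY, MvPolynomial.sum_def, map_sum]
  apply Finset.sum_eq_zero
  intro d hd
  have hd0 : d 0 = 0 := by
    by_contra hc
    exact (mem_support_iff.1 hd) (coeff_zero_of_pderiv0 h hc)
  rw [pderiv_monomial]
  have : ((d + Finsupp.single 1 1 : Fin 2 →₀ ℕ)) 0 = 0 := by simp [hd0]
  rw [this]
  simp

def scaleInv (P : MvPolynomial (Fin 2) ℝ) : MvPolynomial (Fin 2) ℝ :=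
  (AddMonoidAlgebra.coeff P).sum fun d c => monomial d (c / (2 + d 0 + d 1))

lemma degreeOf_scaleInv (P : MvPolynomial (Fin 2) ℝ) (i : Fin 2) {m : ℕ}
    (h : degreeOf i P ≤ m) : degreeOf i (scaleInv P) ≤ m := by
  rw [scaleInv, MvPolynomial.sum_def]
  apply degreeOf_sum_le'
  intro d hd
  exact le_trans (degreeOf_monomial_le _ _ _) (degreeOf_le_iff'.1 h d hd)

lemma X_mul_pderiv_monomial (i : Fin 2) (d : Fin 2 →₀ ℕ) (c : ℝ) :
    X i * pderiv i (monomial d c) = monomial d (c * d i) := by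
  rw [pderiv_monomial, ← pow_one (MvPolynomial.X i : MvPolynomial (Fin 2) ℝ),
    ← monomial_single_add]
  by_cases hz : d i = 0
  · rw [hz]; push_cast; rw [mul_zero, monomial_zero, monomial_zero]
  · have heq : Finsupp.single i 1 + (d - Finsupp.single i 1) = d := by
      ext t
      simp only [Finsupp.add_apply, Finsupp.coe_tsub, Pi.sub_apply, Finsupp.single_apply]
      by_cases ht : i = t
      · subst ht; simp only [eq_self_iff_true, if_true]; omega
      · simp [ht]
    rw [heq]

lemma T_scaleInv (P : MvPolynomial (Fin 2) ℝ) :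
    MvPolynomial.C 2 * scaleInv P + MvPolynomial.X 0 * pderiv 0 (scaleInv P) + MvPolynomial.X 1 * pderiv 1 (scaleInv P) = P := by
  rw [scaleInv, MvPolynomial.sum_def, map_sum, map_sum, Finset.mul_sum, Finset.mul_sum, Finset.mul_sum,
    ← Finset.sum_add_distrib, ← Finset.sum_add_distrib]
  have key : ∀ d ∈ P.support,
      MvPolynomial.C 2 * monomial d (P.coeff d / (2 + d 0 + d 1)) +
        MvPolynomial.X 0 * pderiv 0 (monomial d (P.coeff d / (2 + d 0 + d 1))) +
        MvPolynomial.X 1 * pderiv 1 (monomial d (P.coeff d / (2 + d 0 + d 1))) =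
      monomial d (P.coeff d) := by
    intro d _
    rw [X_mul_pderiv_monomial, X_mul_pderiv_monomial]
    rw [MvPolynomial.C_mul_monomial, ← map_add, ← map_add]
    congr 1
    have hne : (2 + (d 0 : ℝ) + d 1) ≠ 0 := by positivity
    field_simp
  exact (Finset.sum_congr rfl key).trans P.support_sum_monomial_coeff




lemma div_poly (B : ℕ) : ∀ n : ℕ, ∀ P : Polynomial KK, P.natDegree ≤ n →
    P.eval 1 = 0 → P.eval (-1) = 0 → (∀ i, degreeOf 0 (P.coeff i) ≤ B) →
    ∃ W : Polynomial KK, P = (Polynomial.X ^ 2 - 1) * W ∧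
      W.natDegree + 2 ≤ max 2 P.natDegree ∧ ∀ i, degreeOf 0 (W.coeff i) ≤ B := by
  intro n
  induction n using Nat.strong_induction_on with
  | _ n ih =>
    intro P hdeg h1 hm1 hcB
    by_cases hP : P.natDegree ≤ 1
    · have hPX := Polynomial.eq_X_add_C_of_natDegree_le_one hP
      have e1 : P.coeff 1 + P.coeff 0 = 0 := by
        conv_lhs at h1 => rw [hPX]
        simpa using h1
      have e2 : -P.coeff 1 + P.coeff 0 = 0 := by
        conv_lhs at hm1 => rw [hPX]
        simpa using hm1
      have hb : (2 : KK) * P.coeff 0 = 0 := by linear_combination e1 + e2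
      have hb0 : P.coeff 0 = 0 := (mul_eq_zero.1 hb).resolve_left two_ne_zero
      have ha0 : P.coeff 1 = 0 := by linear_combination e1 - hb0
      have hP0 : P = 0 := by rw [hPX, ha0, hb0]; simp
      exact ⟨0, by rw [hP0, mul_zero], by simp, fun i => by simp⟩
    · push_neg at hP
      have hm2 : 2 ≤ P.natDegree := hP
      set m := P.natDegree with hm
      set a := P.coeff m with ha
      set P' := P - Polynomial.C a * Polynomial.X ^ m + Polynomial.C a * Polynomial.X ^ (m - 2)
        with hP'
      have hfact : P = P' + (Polynomial.X ^ 2 - 1) * (Polynomial.C a * Polynomial.X ^ (m - 2)) := by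
        rw [hP']
        have hxx : (Polynomial.X : Polynomial KK) ^ 2 * Polynomial.X ^ (m - 2)
            = Polynomial.X ^ m := by
          rw [← pow_add]; congr 1; omega
        ring_nf
        rw [mul_assoc, hxx]
        ring
      have hdeg' : P'.natDegree ≤ m - 1 := by
        apply Polynomial.natDegree_le_iff_coeff_eq_zero.2
        intro N hN
        rw [hP', Polynomial.coeff_add, Polynomial.coeff_sub, Polynomial.coeff_C_mul,
          Polynomial.coeff_C_mul, Polynomial.coeff_X_pow, Polynomial.coeff_X_pow]
        by_cases hNm2 : N = m
        · subst hNm2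
          have hm2' : ¬(m = m - 2) := by omega
          simp [← ha, hm2']
        · have hcz : P.coeff N = 0 := by
            apply Polynomial.coeff_eq_zero_of_natDegree_lt
            omega
          have h2 : ¬(N = m - 2) := by omega
          simp [hcz, hNm2, h2]
      have hsub : P' = P - (Polynomial.X ^ 2 - 1) * (Polynomial.C a * Polynomial.X ^ (m - 2)) := by
        conv_lhs => rw [show P' = P' from rfl]
        rw [hfact]; ring
      have hev1 : P'.eval 1 = 0 := by
        rw [hsub, Polynomial.eval_sub, Polynomial.eval_mul, h1]
        simp
      have hevm1 : P'.eval (-1) = 0 := by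
        rw [hsub, Polynomial.eval_sub, Polynomial.eval_mul, hm1]
        norm_num
      have hcB' : ∀ i, degreeOf 0 (P'.coeff i) ≤ B := by
        intro i
        rw [hP', Polynomial.coeff_add, Polynomial.coeff_sub, Polynomial.coeff_C_mul,
          Polynomial.coeff_C_mul, Polynomial.coeff_X_pow, Polynomial.coeff_X_pow]
        refine le_trans (degreeOf_add_le _ _ _) (max_le (le_trans (degreeOf_sub_le _ _ _)
          (max_le (hcB i) ?_)) ?_) <;>
        · split_ifs
          · simpa using hcB m
          · simp
      obtain ⟨W', hW'eq, hW'deg, hW'c⟩ := ih (m - 1) (by omega) P' hdeg' hev1 hevm1 hcB'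
      refine ⟨W' + Polynomial.C a * Polynomial.X ^ (m - 2), ?_, ?_, ?_⟩
      · rw [hfact, hW'eq]; ring
      · have h1' : (W' + Polynomial.C a * Polynomial.X ^ (m - 2)).natDegree
            ≤ max W'.natDegree (m - 2) :=
          le_trans (Polynomial.natDegree_add_le _ _)
            (max_le_max (le_refl _) (Polynomial.natDegree_C_mul_X_pow_le a (m - 2)))
        have h2' : max 2 P'.natDegree ≤ max 2 (m - 1) := max_le_max (le_refl _) hdeg'
        have := le_trans hW'deg h2'
        simp only [le_max_iff] at this h1' ⊢
        omega
      · intro i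
        rw [Polynomial.coeff_add, Polynomial.coeff_C_mul, Polynomial.coeff_X_pow]
        refine le_trans (degreeOf_add_le _ _ _) (max_le (hW'c i) ?_)
        split_ifs
        · simpa using hcB m
        · simp





-- evaluation of the outer-polynomial form at a constant
lemma eval_finSucc_const (P : MvPolynomial (Fin 2) ℝ) (c : ℝ) (s : Fin 1 → ℝ) :
    MvPolynomial.eval s (Polynomial.eval (MvPolynomial.C c) (finSuccEquiv ℝ 1 P))
      = MvPolynomial.eval ![c, s 0] P := by
  have hs : (![c, s 0] : Fin 2 → ℝ) = Fin.cons c s := by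
    funext i
    refine Fin.cases ?_ ?_ i
    · rfl
    · intro j
      have : j = 0 := Subsingleton.elim j 0
      subst this
      rfl
  rw [hs, eval_eq_eval_mv_eval']
  rw [Polynomial.eval_map]
  have := Polynomial.hom_eval₂ (finSuccEquiv ℝ 1 P) (RingHom.id KK)
    (MvPolynomial.eval s) (MvPolynomial.C c)
  rw [Polynomial.eval, this]
  simp

lemma poly_eval_const_eq_zero {P : MvPolynomial (Fin 2) ℝ} {c : ℝ}
    (h : ∀ t : ℝ, MvPolynomial.eval ![c, t] P = 0) :
    Polynomial.eval (MvPolynomial.C c) (finSuccEquiv ℝ 1 P) = 0 := by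
  apply MvPolynomial.funext
  intro s
  rw [eval_finSucc_const, map_zero]
  exact h (s 0)

lemma factor_x (P : MvPolynomial (Fin 2) ℝ)
    (h1 : ∀ t : ℝ, MvPolynomial.eval ![1, t] P = 0)
    (h2 : ∀ t : ℝ, MvPolynomial.eval ![-1, t] P = 0) :
    ∃ w : MvPolynomial (Fin 2) ℝ, P = (MvPolynomial.X 0 ^ 2 - 1) * w ∧
      degreeOf 0 w + 2 ≤ max 2 (degreeOf 0 P) ∧ degreeOf 1 w ≤ degreeOf 1 P := by
  set Q := finSuccEquiv ℝ 1 P with hQ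
  have hc1 : Q.eval 1 = 0 := by
    have := poly_eval_const_eq_zero h1
    rwa [map_one] at this
  have hcm1 : Q.eval (-1) = 0 := by
    have := poly_eval_const_eq_zero h2
    rwa [map_neg, map_one] at this
  have hcB : ∀ i, degreeOf 0 (Q.coeff i) ≤ degreeOf 1 P := by
    intro i
    have := degreeOf_coeff_finSuccEquiv P 0 i
    simpa using this
  obtain ⟨W, hWeq, hWdeg, hWc⟩ := div_poly (degreeOf 1 P) Q.natDegree Q (le_refl _) hc1 hcm1 hcB
  set w := (finSuccEquiv ℝ 1).symm W with hw
  have hWw : finSuccEquiv ℝ 1 w = W := by rw [hw]; exact (finSuccEquiv ℝ 1).apply_symm_apply W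
  refine ⟨w, ?_, ?_, ?_⟩
  · have : (finSuccEquiv ℝ 1).symm Q = P := (finSuccEquiv ℝ 1).symm_apply_apply P
    rw [← this, hWeq, map_mul, map_sub, map_one, map_pow]
    congr 2
    have : (finSuccEquiv ℝ 1).symm Polynomial.X = MvPolynomial.X 0 := by
      rw [← finSuccEquiv_X_zero (R := ℝ) (n := 1)]
      exact (finSuccEquiv ℝ 1).symm_apply_apply _
    rw [this]
  · have hd : degreeOf 0 w = W.natDegree := by
      rw [← natDegree_finSuccEquiv, hWw]
    have hd' : degreeOf 0 P = Q.natDegree := by rw [← natDegree_finSuccEquiv, hQ]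
    rw [hd, hd']
    exact hWdeg
  · apply degreeOf_le_iff'.2
    intro d hd
    rw [MvPolynomial.mem_support_iff] at hd
    have hcons : Finsupp.cons (d 0) (Finsupp.tail d) = d := Finsupp.cons_tail d
    have hco : MvPolynomial.coeff d w = MvPolynomial.coeff (Finsupp.tail d) (W.coeff (d 0)) := by
      rw [← hWw, finSuccEquiv_coeff_coeff, hcons]
    rw [hco] at hd
    have hmem : Finsupp.tail d ∈ (W.coeff (d 0)).support := MvPolynomial.mem_support_iff.2 hd
    have := degreeOf_le_iff'.1 (hWc (d 0)) _ hmem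
    have htail : (Finsupp.tail d) 0 = d 1 := by
      rw [Finsupp.tail_apply]
      rfl
    rwa [htail] at this

lemma factor_y (P : MvPolynomial (Fin 2) ℝ)
    (h1 : ∀ t : ℝ, MvPolynomial.eval ![t, 1] P = 0)
    (h2 : ∀ t : ℝ, MvPolynomial.eval ![t, -1] P = 0) :
    ∃ w : MvPolynomial (Fin 2) ℝ, P = (MvPolynomial.X 1 ^ 2 - 1) * w ∧
      degreeOf 1 w + 2 ≤ max 2 (degreeOf 1 P) ∧ degreeOf 0 w ≤ degreeOf 0 P := by
  classical
  set σ : Fin 2 ≃ Fin 2 := Equiv.swap 0 1 with hσ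
  have hswap : ∀ (x y : ℝ), MvPolynomial.eval ![x, y] (rename σ P) =
      MvPolynomial.eval ![y, x] P := by
    intro x y
    rw [MvPolynomial.eval_rename]
    have hv : (![x, y] ∘ ⇑σ) = ![y, x] := by
      funext i
      fin_cases i <;> simp [hσ, Equiv.swap_apply_def]
    rw [hv]
  obtain ⟨w', hw'eq, hw'd0, hw'd1⟩ := factor_x (rename σ P)
    (fun t => by rw [hswap]; exact h1 t) (fun t => by rw [hswap]; exact h2 t)
  have hσσ : (⇑σ ∘ ⇑σ) = id := by
    funext i
    simp [hσ]
  have hσinv : ∀ Q : MvPolynomial (Fin 2) ℝ, rename (⇑σ) (rename (⇑σ) Q) = Q := by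
    intro Q
    rw [MvPolynomial.rename_rename, hσσ, MvPolynomial.rename_id, AlgHom.id_apply]
  have hσ0 : σ 0 = 1 := by simp [hσ]
  have hσ1 : σ 1 = 0 := by simp [hσ]
  refine ⟨rename (⇑σ) w', ?_, ?_, ?_⟩
  · conv_lhs => rw [← hσinv P]
    rw [hw'eq, map_mul, map_sub, map_one, map_pow, MvPolynomial.rename_X, hσ0]
  · have e1 : degreeOf 1 (rename (⇑σ) w') = degreeOf 0 w' := by
      rw [← hσ0]
      exact degreeOf_rename_of_injective σ.injective 0
    have e2 : degreeOf 1 P = degreeOf 0 (rename (⇑σ) P) := by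
      rw [← hσ1]
      rw [degreeOf_rename_of_injective σ.injective 1]
    rw [e1, e2]
    exact hw'd0
  · have e1 : degreeOf 0 (rename (⇑σ) w') = degreeOf 1 w' := by
      rw [← hσ1]
      exact degreeOf_rename_of_injective σ.injective 1
    have e2 : degreeOf 0 P = degreeOf 1 (rename (⇑σ) P) := by
      rw [← hσ0]
      rw [degreeOf_rename_of_injective σ.injective 0]
    rw [e1, e2]
    exact hw'd1


lemma zero_of_integral_zero {f : ℝ → ℝ} (hc : Continuous f)
    (hnn : ∀ x ∈ Set.Icc (-1:ℝ) 1, 0 ≤ f x)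
    (hz : (∫ x in (-1:ℝ)..1, f x) = 0) : ∀ x ∈ Set.Ioo (-1:ℝ) 1, f x = 0 := by
  by_contra hcon
  push_neg at hcon
  obtain ⟨x0, hx0, hfx0⟩ := hcon
  have hx0' : x0 ∈ Set.Icc (-1:ℝ) 1 := Set.mem_Icc_of_Ioo hx0
  have hpos : 0 < f x0 := lt_of_le_of_ne (hnn x0 hx0') (Ne.symm hfx0)
  obtain ⟨δ, hδpos, hδ⟩ := Metric.continuousAt_iff.1 hc.continuousAt (f x0 / 2) (by linarith)
  set a := max (x0 - δ) (-1) with hadef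
  set b := min (x0 + δ) 1 with hbdef
  have hax : a < x0 := by
    apply max_lt <;> [linarith; exact hx0.1]
  have hxb : x0 < b := by
    apply lt_min <;> [linarith; exact hx0.2]
  have ha1 : (-1:ℝ) ≤ a := le_max_right _ _
  have hb1 : b ≤ 1 := min_le_right _ _
  have hab : a < b := lt_trans hax hxb
  have hmidpos : ∀ x ∈ Set.Ioo a b, 0 < f x := by
    intro x hx
    have hd : dist x x0 < δ := by
      rw [Real.dist_eq, abs_lt]
      constructor
      · have := hx.1; have : x0 - δ ≤ a := le_max_left _ _; linarith [hx.1]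
      · have : b ≤ x0 + δ := min_le_left _ _; linarith [hx.2]
    have := hδ hd
    rw [Real.dist_eq, abs_lt] at this
    linarith [this.1]
  have hmid : 0 < ∫ x in a..b, f x :=
    intervalIntegral_pos_of_pos_on (hc.intervalIntegrable a b) hmidpos hab
  have hleft : 0 ≤ ∫ x in (-1:ℝ)..a, f x := by
    apply intervalIntegral.integral_nonneg (by linarith : (-1:ℝ) ≤ a)
    intro u hu
    exact hnn u ⟨hu.1, le_trans hu.2 (by linarith)⟩
  have hright : 0 ≤ ∫ x in b..(1:ℝ), f x := by
    apply intervalIntegral.integral_nonneg (by linarith : b ≤ 1)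
    intro u hu
    exact hnn u ⟨le_trans (by linarith) hu.1, hu.2⟩
  have hsplit1 : (∫ x in (-1:ℝ)..a, f x) + (∫ x in a..b, f x) = ∫ x in (-1:ℝ)..b, f x :=
    intervalIntegral.integral_add_adjacent_intervals (hc.intervalIntegrable _ _)
      (hc.intervalIntegrable _ _)
  have hsplit2 : (∫ x in (-1:ℝ)..b, f x) + (∫ x in b..(1:ℝ), f x) = ∫ x in (-1:ℝ)..1, f x :=
    intervalIntegral.integral_add_adjacent_intervals (hc.intervalIntegrable _ _)
      (hc.intervalIntegrable _ _)
  rw [hz] at hsplit2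
  linarith


lemma sq_nonneg_eval (x y : ℝ) (hx : x ∈ Set.Icc (-1:ℝ) 1) (hy : y ∈ Set.Icc (-1:ℝ) 1)
    (w : MvPolynomial (Fin 2) ℝ) :
    0 ≤ MvPolynomial.eval ![x, y]
      ((MvPolynomial.X 0 ^ 2 - 1) * (MvPolynomial.X 1 ^ 2 - 1) * (w * w)) := by
  simp only [map_mul, map_sub, map_pow, map_one, MvPolynomial.eval_X]
  have hx' : ![x, y] 0 = x := rfl
  have hy' : ![x, y] 1 = y := rfl
  rw [hx', hy']
  have h1 : x ^ 2 - 1 ≤ 0 := by nlinarith [hx.1, hx.2]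
  have h2 : y ^ 2 - 1 ≤ 0 := by nlinarith [hy.1, hy.2]
  have h3 : 0 ≤ (x ^ 2 - 1) * (y ^ 2 - 1) := by nlinarith
  have h4 : 0 ≤ MvPolynomial.eval ![x, y] w * MvPolynomial.eval ![x, y] w := mul_self_nonneg _
  exact mul_nonneg h3 h4

lemma w_zero_of_I_zero (w : MvPolynomial (Fin 2) ℝ)
    (hI : I ((MvPolynomial.X 0 ^ 2 - 1) * (MvPolynomial.X 1 ^ 2 - 1) * (w * w)) = 0) :
    w = 0 := by
  set G := (MvPolynomial.X 0 ^ 2 - 1) * (MvPolynomial.X 1 ^ 2 - 1) * (w * w) with hG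
  have hFcont := cont_inner G
  have hFnn : ∀ x ∈ Set.Icc (-1:ℝ) 1, 0 ≤ ∫ y in (-1:ℝ)..1, MvPolynomial.eval ![x, y] G := by
    intro x hx
    apply intervalIntegral.integral_nonneg (by norm_num : (-1:ℝ) ≤ 1)
    intro y hy
    exact sq_nonneg_eval x y hx hy w
  have hF0 := zero_of_integral_zero hFcont hFnn hI
  have hg0 : ∀ x ∈ Set.Ioo (-1:ℝ) 1, ∀ y ∈ Set.Ioo (-1:ℝ) 1,
      MvPolynomial.eval ![x, y] G = 0 := by
    intro x hx
    have hx' : x ∈ Set.Icc (-1:ℝ) 1 := Set.mem_Icc_of_Ioo hx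
    apply zero_of_integral_zero (cont_ev_y x G)
    · intro y hy
      exact sq_nonneg_eval x y hx' hy w
    · exact hF0 x hx
  have hw0 : ∀ x ∈ Set.Ioo (-1:ℝ) 1, ∀ y ∈ Set.Ioo (-1:ℝ) 1,
      MvPolynomial.eval ![x, y] w = 0 := by
    intro x hx y hy
    have := hg0 x hx y hy
    simp only [hG, map_mul, map_sub, map_pow, map_one, MvPolynomial.eval_X] at this
    have hx' : ![x, y] 0 = x := rfl
    have hy' : ![x, y] 1 = y := rfl
    rw [hx', hy'] at this
    have h1 : x ^ 2 - 1 ≠ 0 := by nlinarith [hx.1, hx.2]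
    have h2 : y ^ 2 - 1 ≠ 0 := by nlinarith [hy.1, hy.2]
    rcases mul_eq_zero.1 this with h | h
    · rcases mul_eq_zero.1 h with h' | h'
      · exact absurd h' h1
      · exact absurd h' h2
    · rcases mul_eq_zero.1 h with h' | h' <;> exact h'
  exact zero_of_zero_on_square hw0

-- IBP zero lemmas
lemma I_dy_zero (G : MvPolynomial (Fin 2) ℝ)
    (htop : ∀ t : ℝ, MvPolynomial.eval ![t, 1] G = 0)
    (hbot : ∀ t : ℝ, MvPolynomial.eval ![t, -1] G = 0) :
    I (pderiv 1 G) = 0 := by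
  unfold I
  have : ∀ x : ℝ, (∫ y in (-1:ℝ)..1, MvPolynomial.eval ![x, y] (pderiv 1 G)) = 0 := by
    intro x
    rw [ftc_y x G, htop x, hbot x, sub_zero]
  simp_rw [this]
  simp

lemma I_dx_zero (G : MvPolynomial (Fin 2) ℝ)
    (hr : ∀ t : ℝ, MvPolynomial.eval ![1, t] G = 0)
    (hl : ∀ t : ℝ, MvPolynomial.eval ![-1, t] G = 0) :
    I (pderiv 0 G) = 0 := by
  rw [I_swap]
  have : ∀ y : ℝ, (∫ x in (-1:ℝ)..1, MvPolynomial.eval ![x, y] (pderiv 0 G)) = 0 := by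
    intro y
    rw [ftc_x y G, hr y, hl y, sub_zero]
  simp_rw [this]
  simp


lemma const_on_hline (a : ℝ) (P : MvPolynomial (Fin 2) ℝ)
    (h : ∀ t : ℝ, MvPolynomial.eval ![t, a] (pderiv 0 P) = 0) :
    ∀ t s : ℝ, MvPolynomial.eval ![t, a] P = MvPolynomial.eval ![s, a] P := by
  have hR : R1 a (pderiv 0 P) = 0 := by
    apply Polynomial.funext
    intro x
    rw [eval_R1, h x, Polynomial.eval_zero]
  have hd : (R1 a P).derivative = 0 := by rw [deriv_R1, hR]
  have hC := Polynomial.eq_C_of_derivative_eq_zero hd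
  intro t s
  rw [← eval_R1, ← eval_R1, hC]
  simp

lemma const_on_vline (a : ℝ) (P : MvPolynomial (Fin 2) ℝ)
    (h : ∀ t : ℝ, MvPolynomial.eval ![a, t] (pderiv 1 P) = 0) :
    ∀ t s : ℝ, MvPolynomial.eval ![a, t] P = MvPolynomial.eval ![a, s] P := by
  have hR : R2 a (pderiv 1 P) = 0 := by
    apply Polynomial.funext
    intro x
    rw [eval_R2, h x, Polynomial.eval_zero]
  have hd : (R2 a P).derivative = 0 := by rw [deriv_R2, hR]
  have hC := Polynomial.eq_C_of_derivative_eq_zero hd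
  intro t s
  rw [← eval_R2, ← eval_R2, hC]
  simp

end RectAux

open intervalIntegral

/-- Unisolvence of the rectangular `H²(curl)`-conforming element on
`K̂ = (-1,1)²`.  If `û = (û₁, û₂) ∈ Q_{k-1,k} × Q_{k,k-1}` (`k ≥ 3`) has
(i) vanishing tangential component on all four edges, (ii) vanishing curl on `∂K̂`,
(iii) `∫_{K̂} û · (∇̂×φ̂) = 0` for all `φ̂ ∈ Q̃_{k-3}`, and
(iv) `∫_{K̂} û · q̂ = 0` for all `q̂ ∈ Q_{k-2} · x̂`, then `û = 0`. -/
theorem rect_element_unisolvent (k : ℕ) (hk : 3 ≤ k)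
    (u1 u2 : MvPolynomial (Fin 2) ℝ)
    (hu1x : degreeOf 0 u1 ≤ k - 1) (hu1y : degreeOf 1 u1 ≤ k)
    (hu2x : degreeOf 0 u2 ≤ k) (hu2y : degreeOf 1 u2 ≤ k - 1)
    -- (i) tangential component vanishes on the four edges
    (htang : ∀ t ∈ Set.Icc (-1 : ℝ) 1,
      eval ![(-1 : ℝ), t] u2 = 0 ∧ eval ![(1 : ℝ), t] u2 = 0 ∧
      eval ![t, (-1 : ℝ)] u1 = 0 ∧ eval ![t, (1 : ℝ)] u1 = 0)
    -- (ii) the curl `∂₁û₂ - ∂₂û₁` vanishes on the boundary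
    (hcurl : ∀ t ∈ Set.Icc (-1 : ℝ) 1,
      eval ![(-1 : ℝ), t] (pderiv 0 u2 - pderiv 1 u1) = 0 ∧
      eval ![(1 : ℝ), t] (pderiv 0 u2 - pderiv 1 u1) = 0 ∧
      eval ![t, (-1 : ℝ)] (pderiv 0 u2 - pderiv 1 u1) = 0 ∧
      eval ![t, (1 : ℝ)] (pderiv 0 u2 - pderiv 1 u1) = 0)
    -- (iii) moments against `∇̂×φ̂ = (∂₂φ̂, -∂₁φ̂)` for `φ̂ ∈ Q̃_{k-3}`
    (hmomcurl : ∀ φ : MvPolynomial (Fin 2) ℝ,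
      degreeOf 0 φ ≤ k - 3 → degreeOf 1 φ ≤ k - 3 → coeff 0 φ = 0 →
      ∫ x in (-1 : ℝ)..1, ∫ y in (-1 : ℝ)..1,
        (eval ![x, y] u1 * eval ![x, y] (pderiv 1 φ) -
          eval ![x, y] u2 * eval ![x, y] (pderiv 0 φ)) = 0)
    -- (iv) moments against `q̂ = r x̂ = (x̂₁ r, x̂₂ r)` for `r ∈ Q_{k-2}`
    (hmomx : ∀ r : MvPolynomial (Fin 2) ℝ,
      degreeOf 0 r ≤ k - 2 → degreeOf 1 r ≤ k - 2 →
      ∫ x in (-1 : ℝ)..1, ∫ y in (-1 : ℝ)..1,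
        (eval ![x, y] u1 * (x * eval ![x, y] r) +
          eval ![x, y] u2 * (y * eval ![x, y] r)) = 0) :
    u1 = 0 ∧ u2 = 0 := by
  have hIcc : (Set.Icc (-1:ℝ) 1).Infinite := Set.Icc_infinite (by norm_num)
  have hIoo : (Set.Ioo (-1:ℝ) 1).Infinite := Set.Ioo_infinite (by norm_num)
  have hkk : k - 1 + 1 = k := by omega
  -- edge vanishing, extended to whole lines
  have hu2L : ∀ t:ℝ, eval ![-1,t] u2 = 0 := line_zero_v hIcc (fun t ht => (htang t ht).1)
  have hu2R : ∀ t:ℝ, eval ![1,t] u2 = 0 := line_zero_v hIcc (fun t ht => (htang t ht).2.1)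
  have hu1B : ∀ t:ℝ, eval ![t,-1] u1 = 0 := line_zero_h hIcc (fun t ht => (htang t ht).2.2.1)
  have hu1T : ∀ t:ℝ, eval ![t,1] u1 = 0 := line_zero_h hIcc (fun t ht => (htang t ht).2.2.2)
  set c : MvPolynomial (Fin 2) ℝ := pderiv 0 u2 - pderiv 1 u1 with hc
  have hcL : ∀ t:ℝ, eval ![-1,t] c = 0 := line_zero_v hIcc (fun t ht => (hcurl t ht).1)
  have hcR : ∀ t:ℝ, eval ![1,t] c = 0 := line_zero_v hIcc (fun t ht => (hcurl t ht).2.1)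
  have hcB : ∀ t:ℝ, eval ![t,-1] c = 0 := line_zero_h hIcc (fun t ht => (hcurl t ht).2.2.1)
  have hcT : ∀ t:ℝ, eval ![t,1] c = 0 := line_zero_h hIcc (fun t ht => (hcurl t ht).2.2.2)
  -- Step 1 : moments of the curl against all of Q_{k-3}
  have step1 : ∀ φ : MvPolynomial (Fin 2) ℝ, degreeOf 0 φ ≤ k-3 → degreeOf 1 φ ≤ k-3 →
      I (c * φ) = 0 := by
    intro φ hd0 hd1
    set ψ := φ - MvPolynomial.C (coeff 0 φ) with hψ
    have hψ0 : degreeOf 0 ψ ≤ k - 3 :=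
      le_trans (degreeOf_sub_le _ _ _) (max_le hd0 (by simp))
    have hψ1 : degreeOf 1 ψ ≤ k - 3 :=
      le_trans (degreeOf_sub_le _ _ _) (max_le hd1 (by simp))
    have hψc : coeff 0 ψ = 0 := by
      rw [hψ, MvPolynomial.coeff_sub, MvPolynomial.coeff_zero_C, sub_self]
    have hmom := hmomcurl ψ hψ0 hψ1 hψc
    have hmomI : I (u1 * pderiv 1 ψ - u2 * pderiv 0 ψ) = 0 := by
      rw [← hmom]; unfold I; simp_rw [map_sub, map_mul]
    have hps0 : pderiv 0 ψ = pderiv 0 φ := by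
      rw [hψ, map_sub, pderiv_C, sub_zero]
    have hps1 : pderiv 1 ψ = pderiv 1 φ := by
      rw [hψ, map_sub, pderiv_C, sub_zero]
    rw [hps0, hps1] at hmomI
    have hid : c * φ = pderiv 0 (u2 * φ) - pderiv 1 (u1 * φ)
        - (u2 * pderiv 0 φ - u1 * pderiv 1 φ) := by
      rw [hc]
      simp only [pderiv_mul]
      ring
    rw [hid, I_sub, I_sub]
    rw [I_dx_zero (u2*φ) (fun t => by rw [map_mul, hu2R t, zero_mul])
      (fun t => by rw [map_mul, hu2L t, zero_mul])]
    rw [I_dy_zero (u1*φ) (fun t => by rw [map_mul, hu1T t, zero_mul])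
      (fun t => by rw [map_mul, hu1B t, zero_mul])]
    have hneg : u2 * pderiv 0 φ - u1 * pderiv 1 φ
        = -(u1 * pderiv 1 φ - u2 * pderiv 0 φ) := by ring
    rw [hneg, I_neg, hmomI]
    ring
  -- Step 2 : degree bounds on the curl, factorization, curl = 0
  have hc0 : degreeOf 0 c ≤ k - 1 := by
    rw [hc]
    refine le_trans (degreeOf_sub_le _ _ _) (max_le ?_ ?_)
    · exact degreeOf_pderiv_self u2 0 (by rw [hkk]; exact hu2x)
    · exact degreeOf_pderiv_other u1 1 0 (by decide) hu1x
  have hc1 : degreeOf 1 c ≤ k - 1 := by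
    rw [hc]
    refine le_trans (degreeOf_sub_le _ _ _) (max_le ?_ ?_)
    · exact degreeOf_pderiv_other u2 0 1 (by decide) hu2y
    · exact degreeOf_pderiv_self u1 1 (by rw [hkk]; exact hu1y)
  obtain ⟨v, hveq, hvd0, hvd1⟩ := factor_x c hcR hcL
  have hvd0' : degreeOf 0 v ≤ k - 3 := by
    have h2 := le_trans hvd0 (max_le (by omega) hc0)
    omega
  have hvd1' : degreeOf 1 v ≤ k - 1 := le_trans hvd1 hc1
  have hvT : ∀ t:ℝ, eval ![t,1] v = 0 := by
    apply line_zero_h hIoo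
    intro t ht
    have h0 := hcT t
    rw [hveq, map_mul] at h0
    have hx : MvPolynomial.eval ![t,(1:ℝ)] (MvPolynomial.X 0 ^2 - 1) = t^2 - 1 := by simp
    rw [hx] at h0
    have hne : t^2 - 1 ≠ 0 := by nlinarith [ht.1, ht.2]
    exact (mul_eq_zero.1 h0).resolve_left hne
  have hvB : ∀ t:ℝ, eval ![t,-1] v = 0 := by
    apply line_zero_h hIoo
    intro t ht
    have h0 := hcB t
    rw [hveq, map_mul] at h0
    have hx : MvPolynomial.eval ![t,(-1:ℝ)] (MvPolynomial.X 0 ^2 - 1) = t^2 - 1 := by simp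
    rw [hx] at h0
    have hne : t^2 - 1 ≠ 0 := by nlinarith [ht.1, ht.2]
    exact (mul_eq_zero.1 h0).resolve_left hne
  obtain ⟨w, hweq, hwd1, hwd0⟩ := factor_y v hvT hvB
  have hwd1' : degreeOf 1 w ≤ k - 3 := by
    have := le_trans hwd1 (max_le (by omega) hvd1')
    omega
  have hwd0' : degreeOf 0 w ≤ k - 3 := le_trans hwd0 hvd0'
  have hcw : c * w = (MvPolynomial.X 0 ^2 - 1) * (MvPolynomial.X 1 ^2 - 1) * (w * w) := by
    rw [hveq, hweq]; ring
  have hw0 : w = 0 := w_zero_of_I_zero w (by rw [← hcw]; exact step1 w hwd0' hwd1')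
  have hczero : c = 0 := by rw [hveq, hweq, hw0, mul_zero, mul_zero]
  -- Step 3 : potential p with ∇p = u
  set p0 := integX u1 with hp0def
  set g : MvPolynomial (Fin 2) ℝ := u2 - pderiv 1 p0 with hgdef
  have hg0 : pderiv 0 g = 0 := by
    rw [hgdef, map_sub, pderiv_comm01, hp0def, pderiv_integX, ← hc]
    exact hczero
  set p : MvPolynomial (Fin 2) ℝ := p0 + integY g with hpdef
  have hp0 : pderiv 0 p = u1 := by
    rw [hpdef, map_add, hp0def, pderiv_integX, pderiv0_integY hg0, add_zero]
  have hp1 : pderiv 1 p = u2 := by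
    rw [hpdef, map_add, pderiv_integY, hgdef]
    ring
  have hp0d0 : degreeOf 0 p0 ≤ k := by
    rw [hp0def]
    have := degreeOf_integX_self u1 hu1x
    rwa [hkk] at this
  have hp0d1 : degreeOf 1 p0 ≤ k := by
    rw [hp0def]
    exact degreeOf_integX_other u1 hu1y
  have hgd0 : degreeOf 0 g ≤ k := by
    rw [hgdef]
    refine le_trans (degreeOf_sub_le _ _ _) (max_le hu2x ?_)
    exact degreeOf_pderiv_other p0 1 0 (by decide) hp0d0
  have hgd1 : degreeOf 1 g ≤ k - 1 := by
    rw [hgdef]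
    refine le_trans (degreeOf_sub_le _ _ _) (max_le hu2y ?_)
    exact degreeOf_pderiv_self p0 1 (by rw [hkk]; exact hp0d1)
  have hpd0 : degreeOf 0 p ≤ k := by
    rw [hpdef]
    refine le_trans (degreeOf_add_le _ _ _) (max_le hp0d0 ?_)
    exact degreeOf_integY_other g hgd0
  have hpd1 : degreeOf 1 p ≤ k := by
    rw [hpdef]
    refine le_trans (degreeOf_add_le _ _ _) (max_le hp0d1 ?_)
    have := degreeOf_integY_self g hgd1
    rwa [hkk] at this
  -- Step 4 : p is a single constant on the whole boundary
  have hconstT := const_on_hline 1 p (fun t => by rw [hp0]; exact hu1T t)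
  have hconstB := const_on_hline (-1) p (fun t => by rw [hp0]; exact hu1B t)
  have hconstR := const_on_vline 1 p (fun t => by rw [hp1]; exact hu2R t)
  have hconstL := const_on_vline (-1) p (fun t => by rw [hp1]; exact hu2L t)
  set c0 : ℝ := eval ![1,1] p with hc0def
  have hT : ∀ t:ℝ, eval ![t,1] p = c0 := fun t => hconstT t 1
  have hR : ∀ t:ℝ, eval ![1,t] p = c0 := fun t => (hconstR t 1).trans (hT 1)
  have hB : ∀ t:ℝ, eval ![t,-1] p = c0 := fun t => (hconstB t 1).trans (hR (-1))
  have hL : ∀ t:ℝ, eval ![-1,t] p = c0 := fun t => (hconstL t 1).trans (hT (-1))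
  set q : MvPolynomial (Fin 2) ℝ := p - MvPolynomial.C c0 with hqdef
  have hq0 : pderiv 0 q = u1 := by rw [hqdef, map_sub, pderiv_C, sub_zero, hp0]
  have hq1 : pderiv 1 q = u2 := by rw [hqdef, map_sub, pderiv_C, sub_zero, hp1]
  have hqT : ∀ t:ℝ, eval ![t,1] q = 0 := fun t => by
    rw [hqdef, map_sub, MvPolynomial.eval_C, hT t, sub_self]
  have hqB : ∀ t:ℝ, eval ![t,-1] q = 0 := fun t => by
    rw [hqdef, map_sub, MvPolynomial.eval_C, hB t, sub_self]
  have hqR : ∀ t:ℝ, eval ![1,t] q = 0 := fun t => by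
    rw [hqdef, map_sub, MvPolynomial.eval_C, hR t, sub_self]
  have hqL : ∀ t:ℝ, eval ![-1,t] q = 0 := fun t => by
    rw [hqdef, map_sub, MvPolynomial.eval_C, hL t, sub_self]
  have hqd0 : degreeOf 0 q ≤ k := by
    rw [hqdef]
    exact le_trans (degreeOf_sub_le _ _ _) (max_le hpd0 (by simp))
  have hqd1 : degreeOf 1 q ≤ k := by
    rw [hqdef]
    exact le_trans (degreeOf_sub_le _ _ _) (max_le hpd1 (by simp))
  -- Step 5 : factor q
  obtain ⟨v2, hv2eq, hv2d0, hv2d1⟩ := factor_x q hqR hqL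
  have hv2d0' : degreeOf 0 v2 ≤ k - 2 := by
    have := le_trans hv2d0 (max_le (by omega) hqd0)
    omega
  have hv2d1' : degreeOf 1 v2 ≤ k := le_trans hv2d1 hqd1
  have hv2T : ∀ t:ℝ, eval ![t,1] v2 = 0 := by
    apply line_zero_h hIoo
    intro t ht
    have h0 := hqT t
    rw [hv2eq, map_mul] at h0
    have hx : MvPolynomial.eval ![t,(1:ℝ)] (MvPolynomial.X 0 ^2 - 1) = t^2 - 1 := by simp
    rw [hx] at h0
    have hne : t^2 - 1 ≠ 0 := by nlinarith [ht.1, ht.2]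
    exact (mul_eq_zero.1 h0).resolve_left hne
  have hv2B : ∀ t:ℝ, eval ![t,-1] v2 = 0 := by
    apply line_zero_h hIoo
    intro t ht
    have h0 := hqB t
    rw [hv2eq, map_mul] at h0
    have hx : MvPolynomial.eval ![t,(-1:ℝ)] (MvPolynomial.X 0 ^2 - 1) = t^2 - 1 := by simp
    rw [hx] at h0
    have hne : t^2 - 1 ≠ 0 := by nlinarith [ht.1, ht.2]
    exact (mul_eq_zero.1 h0).resolve_left hne
  obtain ⟨s, hseq, hsd1, hsd0⟩ := factor_y v2 hv2T hv2B
  have hsd1' : degreeOf 1 s ≤ k - 2 := by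
    have := le_trans hsd1 (max_le (by omega) hv2d1')
    omega
  have hsd0' : degreeOf 0 s ≤ k - 2 := le_trans hsd0 hv2d0'
  -- Step 6 : moments of q
  have step2 : ∀ r : MvPolynomial (Fin 2) ℝ, degreeOf 0 r ≤ k-2 → degreeOf 1 r ≤ k-2 →
      I (q * (MvPolynomial.C 2 * r + MvPolynomial.X 0 * pderiv 0 r
        + MvPolynomial.X 1 * pderiv 1 r)) = 0 := by
    intro r hr0 hr1
    have hmom := hmomx r hr0 hr1
    have hmomI : I (u1 * (MvPolynomial.X 0 * r) + u2 * (MvPolynomial.X 1 * r)) = 0 := by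
      rw [← hmom]; unfold I
      simp only [map_add, map_mul, MvPolynomial.eval_X, Matrix.cons_val_zero, Matrix.cons_val_one,
        Matrix.head_cons]
    have hid : u1 * (MvPolynomial.X 0 * r) + u2 * (MvPolynomial.X 1 * r)
        = pderiv 0 (q * (MvPolynomial.X 0 * r)) + pderiv 1 (q * (MvPolynomial.X 1 * r))
          - q * (MvPolynomial.C 2 * r + MvPolynomial.X 0 * pderiv 0 r
            + MvPolynomial.X 1 * pderiv 1 r) := by
      have hC2 : (MvPolynomial.C 2 : MvPolynomial (Fin 2) ℝ) = 2 := by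
        rw [map_ofNat]
      simp only [pderiv_mul, pderiv_X_self, pderiv_X_of_ne (show (1:Fin 2) ≠ 0 by decide),
        pderiv_X_of_ne (show (0:Fin 2) ≠ 1 by decide), hq0, hq1, hC2]
      ring
    rw [hid, I_sub, I_add] at hmomI
    rw [I_dx_zero (q * (MvPolynomial.X 0 * r)) (fun t => by rw [map_mul, hqR t, zero_mul])
      (fun t => by rw [map_mul, hqL t, zero_mul])] at hmomI
    rw [I_dy_zero (q * (MvPolynomial.X 1 * r)) (fun t => by rw [map_mul, hqT t, zero_mul])
      (fun t => by rw [map_mul, hqB t, zero_mul])] at hmomI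
    linarith
  have hqs : I (q * s) = 0 := by
    have := step2 (scaleInv s) (degreeOf_scaleInv s 0 hsd0') (degreeOf_scaleInv s 1 hsd1')
    rwa [T_scaleInv] at this
  have hs0 : s = 0 := by
    apply w_zero_of_I_zero s
    have hqs' : q * s = (MvPolynomial.X 0 ^2 - 1) * (MvPolynomial.X 1 ^2 - 1) * (s * s) := by
      rw [hv2eq, hseq]; ring
    rw [← hqs']
    exact hqs
  have hqzero : q = 0 := by rw [hv2eq, hseq, hs0, mul_zero, mul_zero]
  constructor
  · rw [← hq0, hqzero, map_zero]
  · rw [← hq1, hqzero, map_zero]
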